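/- Let n ∈ ℝ, k_n = n − 1, and let g be the diagonal metric on {(r,φ) : r > 0} with components g_rr = 1/r^{2n}, g_φφ = 1/r^{2(n−1)}, g_rφ = g_φr = 0. Then the vector fields X₁ = rⁿ cos(k_n φ) ∂/∂r + r^{n−1} sin(k_n φ) ∂/∂φ and X₂ = rⁿ sin(k_n φ) ∂/∂r − r^{n−1} cos(k_n φ) ∂/∂φ satisfy the coordinate Killing equations for g: for every pair of indices i,j ∈ {r,φ} and every point with r > 0, Xᵏ ∂_k g_ij + g_kj ∂_i Xᵏ + g_ik ∂_j Xᵏ = 0 (sum over k ∈ {r,φ}). -/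

import Mathlib

open Real

/-- Partial derivative in the coordinates (r, φ): index 0 is ∂/∂r, index 1 is ∂/∂φ. -/
noncomputable def pd (k : Fin 2) (f : ℝ → ℝ → ℝ) (r φ : ℝ) : ℝ :=
  if k = 0 then deriv (fun x => f x φ) r else deriv (fun x => f r x) φ

/-- Components of the conformal metric ds_n² = (1/r^(2n))(dr² + r² dφ²):
g_rr = r^(−2n), g_φφ = r^(−2(n−1)), g_rφ = g_φr = 0. -/
noncomputable def gmet (n : ℝ) (i j : Fin 2) (r φ : ℝ) : ℝ :=
  if i = 0 ∧ j = 0 then r ^ (-(2*n))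
  else if i = 1 ∧ j = 1 then r ^ (-(2*(n-1)))
  else 0

/-- Components of the vector field X₁ = rⁿ cos(k_n φ) ∂/∂r + r^(n−1) sin(k_n φ) ∂/∂φ. -/
noncomputable def X1 (n : ℝ) (k : Fin 2) (r φ : ℝ) : ℝ :=
  if k = 0 then r ^ n * cos ((n-1)*φ) else r ^ (n-1) * sin ((n-1)*φ)

/-- Components of the vector field X₂ = rⁿ sin(k_n φ) ∂/∂r − r^(n−1) cos(k_n φ) ∂/∂φ. -/
noncomputable def X2 (n : ℝ) (k : Fin 2) (r φ : ℝ) : ℝ :=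
  if k = 0 then r ^ n * sin ((n-1)*φ) else -(r ^ (n-1) * cos ((n-1)*φ))

lemma dpow (c r : ℝ) (hr : 0 < r) : deriv (fun x : ℝ => x ^ c) r = c * r ^ (c-1) :=
  Real.deriv_rpow_const r c

lemma dcos (a φ : ℝ) : deriv (fun x : ℝ => cos (a*x)) φ = -(a * sin (a*φ)) := by
  have h := (Real.hasDerivAt_cos (a*φ)).comp φ ((hasDerivAt_id φ).const_mul a)
  simpa [mul_comm, Function.comp_def] using h.deriv

lemma dsin (a φ : ℝ) : deriv (fun x : ℝ => sin (a*x)) φ = a * cos (a*φ) := by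
  have h := (Real.hasDerivAt_sin (a*φ)).comp φ ((hasDerivAt_id φ).const_mul a)
  simpa [mul_comm, Function.comp_def] using h.deriv

lemma rcomb {r : ℝ} (hr : 0 < r) (a b c d : ℝ) (h : a + b = c + d) :
    r ^ a * r ^ b = r ^ c * r ^ d := by
  rw [← Real.rpow_add hr, ← Real.rpow_add hr, h]

/-- X₁ and X₂ satisfy the coordinate Killing equations
Xᵏ ∂_k g_ij + g_kj ∂_i Xᵏ + g_ik ∂_j Xᵏ = 0 for the metric g on {r > 0}. -/
theorem killing_vectors_of_conformal_metric (n : ℝ) :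
    ∀ (i j : Fin 2) (r φ : ℝ), 0 < r →
      (∑ k : Fin 2, (X1 n k r φ * pd k (gmet n i j) r φ
          + gmet n k j r φ * pd i (X1 n k) r φ
          + gmet n i k r φ * pd j (X1 n k) r φ) = 0) ∧
      (∑ k : Fin 2, (X2 n k r φ * pd k (gmet n i j) r φ
          + gmet n k j r φ * pd i (X2 n k) r φ
          + gmet n i k r φ * pd j (X2 n k) r φ) = 0) := by
  intro i j r φ hr
  have e1 : r ^ n * r ^ (-(2*n) - 1) = r ^ (-(2*n)) * r ^ (n-1) :=
    rcomb hr _ _ _ _ (by ring)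
  have e2 : r ^ (-(2*n)) * r ^ n = r ^ (-(2*(n-1))) * r ^ (n-1-1) :=
    rcomb hr _ _ _ _ (by ring)
  have e3 : r ^ n * r ^ (-(2*(n-1)) - 1) = r ^ (-(2*(n-1))) * r ^ (n-1) :=
    rcomb hr _ _ _ _ (by ring)
  fin_cases i <;> fin_cases j <;>
    constructor <;>
    simp only [Fin.sum_univ_two, pd, gmet, X1, X2] <;>
    norm_num <;>
    simp only [dpow _ _ hr, dcos, dsin] <;>
    [ linear_combination (-(2 * n * cos ((n-1)*φ))) * e1;
      linear_combination (-(2 * n * sin ((n-1)*φ))) * e1;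
      linear_combination (-((n-1) * sin ((n-1)*φ))) * e2;
      linear_combination ((n-1) * cos ((n-1)*φ)) * e2;
      linear_combination (-((n-1) * sin ((n-1)*φ))) * e2;
      linear_combination ((n-1) * cos ((n-1)*φ)) * e2;
      linear_combination (-(2 * (n-1) * cos ((n-1)*φ))) * e3;
      linear_combination (-(2 * (n-1) * sin ((n-1)*φ))) * e3 ]
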